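/- If D is an ultrafilter over a set I and the regular cardinal κ, with the order topology, is D-compact, then D is not (κ,κ)-regular. -/

import Mathlib

open Cardinal

/-- `X` is `[μ,λ]`-compact: every open cover by at most `lam` sets
has a subcover by fewer than `μ` sets. -/
def CptIn (μ lam : Cardinal) (X : Type) [TopologicalSpace X] : Prop :=
  ∀ 𝒰 : Set (Set X), (∀ U ∈ 𝒰, IsOpen U) → #𝒰 ≤ lam → ⋃₀ 𝒰 = Set.univ →
    ∃ 𝒱 ⊆ 𝒰, #𝒱 < μ ∧ ⋃₀ 𝒱 = Set.univ

/-- `p` is a `D`-limit point of the sequence `x`. -/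
def IsDLimit {I X : Type} [TopologicalSpace X] (D : Ultrafilter I) (x : I → X) (p : X) : Prop :=
  ∀ U : Set X, IsOpen U → p ∈ U → {i | x i ∈ U} ∈ D

/-- `X` is `D`-compact. -/
def DCompact {I : Type} (D : Ultrafilter I) (X : Type) [TopologicalSpace X] : Prop :=
  ∀ x : I → X, ∃ p : X, IsDLimit D x p

/-- `D` is `μ`-complete. -/
def MuComplete {I : Type} (μ : Cardinal) (D : Ultrafilter I) : Prop :=
  ∀ S : Set (Set I), #S < μ → (∀ A ∈ S, A ∈ D) → ⋂₀ S ∈ D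

/-- `D` is `(μ,lam)`-regular: there is a family of `lam`-many members of `D`
every intersection of `μ`-many of which is empty. -/
def RegUF {I : Type} (μ lam : Cardinal) (D : Ultrafilter I) : Prop :=
  ∃ (A : Type) (Z : A → Set I), #A = lam ∧ (∀ a, Z a ∈ D) ∧
    ∀ S : Set A, #S = μ → ⋂ a ∈ S, Z a = ∅

/-- The ordinal space of a cardinal, with the order topology. -/
noncomputable def ordSpace (c : Cardinal) : Type := c.ord.ToType

noncomputable instance (c : Cardinal) : LinearOrder (ordSpace c) :=
  inferInstanceAs (LinearOrder c.ord.ToType)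
noncomputable instance (c : Cardinal) : TopologicalSpace (ordSpace c) := Preorder.topology _
instance (c : Cardinal) : OrderTopology (ordSpace c) := ⟨rfl⟩

theorem stmt13 {I : Type} (D : Ultrafilter I) (κ : Cardinal) (hκ : κ.IsRegular)
    (h : DCompact D (ordSpace κ)) : ¬RegUF κ κ D := by
  rintro ⟨A, Z, hA, hZD, hS⟩
  have hcard : #(ordSpace κ) = κ := by
    rw [show ordSpace κ = κ.ord.ToType from rfl, Cardinal.mk_toType, Cardinal.card_ord]
  obtain ⟨e⟩ : Nonempty (ordSpace κ ≃ A) := Cardinal.eq.mp (hcard.trans hA.symm)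
  set W : ordSpace κ → Set I := fun α => Z (e α) with hW
  have hWD : ∀ α, W α ∈ D := fun α => hZD _
  have hWS : ∀ σ : Set (ordSpace κ), #σ = κ → ⋂ α ∈ σ, W α = ∅ := by
    intro σ hσ
    have hc : #(e '' σ) = κ := by rw [Cardinal.mk_image_eq e.injective]; exact hσ
    have h0 := hS (e '' σ) hc
    ext i; simp only [Set.mem_iInter, Set.mem_empty_iff_false, iff_false]
    intro hi
    have hmemi : i ∈ ⋂ a ∈ e '' σ, Z a := by
      simp only [Set.mem_iInter]
      rintro a ⟨α, hα, rfl⟩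
      exact hi α hα
    rw [h0] at hmemi; exact hmemi
  have hsmall : ∀ i : I, #{α | i ∈ W α} < κ := by
    intro i
    by_contra hge
    push_neg at hge
    obtain ⟨t, ht, htc⟩ := Cardinal.le_mk_iff_exists_subset.mp hge
    have h0 := hWS t htc
    have hi : i ∈ ⋂ α ∈ t, W α := Set.mem_iInter₂.mpr fun α hα => ht hα
    rw [h0] at hi; exact hi
  have hcof : κ.ord.cof = κ := hκ.cof_eq
  let iso := Ordinal.ToType.mk (o := κ.ord)
  have hx : ∀ i : I, ∃ x : ordSpace κ, ∀ α, i ∈ W α → α ≤ x := by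
    intro i
    let s : Ordinal := ⨆ a : {α // i ∈ W α}, (iso.symm a.1 : Ordinal)
    have hs : s < κ.ord := by
      apply Ordinal.iSup_lt_ord
      · rw [hcof]; exact hsmall i
      · intro a; exact (iso.symm a.1).2
    refine ⟨iso ⟨s, hs⟩, fun α hα => ?_⟩
    have hle : (iso.symm α : Ordinal) ≤ s :=
      le_ciSup (Ordinal.bddAbove_range _) (⟨α, hα⟩ : {α // i ∈ W α})
    have hmono : iso (iso.symm α) ≤ iso ⟨s, hs⟩ := iso.monotone (by exact_mod_cast hle)
    exact ((iso.apply_symm_apply α).symm.trans_le hmono : (α : κ.ord.ToType) ≤ iso ⟨s, hs⟩)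
  choose x hxs using hx
  obtain ⟨p, hp⟩ := h x
  have hlim : Order.IsSuccLimit κ.ord := Cardinal.isSuccLimit_ord hκ.aleph0_le
  obtain ⟨q, hpq⟩ : ∃ q : ordSpace κ, p < q := by
    refine ⟨iso ⟨Order.succ (iso.symm p : Ordinal), Set.mem_Iio.mpr (hlim.succ_lt (Set.mem_Iio.mp (iso.symm p).2))⟩, ?_⟩
    conv_lhs => rw [← iso.apply_symm_apply p]
    exact iso.strictMono (show (iso.symm p : Ordinal) < Order.succ (iso.symm p : Ordinal) from Order.lt_succ _)
  have hB : {i | x i ∈ Set.Iio q} ∈ D := hp _ isOpen_Iio hpq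
  have hmem : ({i | x i ∈ Set.Iio q} ∩ W q) ∈ D := Filter.inter_mem hB (hWD q)
  obtain ⟨i, hi1, hi2⟩ := Ultrafilter.nonempty_of_mem hmem
  exact absurd (hxs i q hi2) (not_le.mpr hi1)
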